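/- Let c > 0, σ > 0 and let d ≥ 1 be an integer. Then ∫₀^∞ exp(−r²/(2σ²))·(sinh(√c·r)/√c)^{d−1} dr = √(π/2)·σ·(2√c)^{−(d−1)} · ∑_{k=0}^{d−1} (−1)^k · binomial(d−1,k) · exp((d−1−2k)²·c·σ²/2) · (1 + (2/√π)·∫₀^{(d−1−2k)√c·σ/√2} exp(−t²) dt). -/

import Mathlib

open Real MeasureTheory intervalIntegral Finset

lemma aux_translate (f : ℝ → ℝ) (μ : ℝ) :
    ∫ x in Set.Ioi (0:ℝ), f (x - μ) = ∫ x in Set.Ioi (-μ), f x := by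
  rw [← MeasureTheory.integral_indicator measurableSet_Ioi, ← MeasureTheory.integral_indicator measurableSet_Ioi,
    ← integral_sub_right_eq_self (fun x => (Set.Ioi (-μ)).indicator f x) (μ := volume) μ]
  congr 1
  ext x
  simp only [Set.indicator_apply, Set.mem_Ioi]
  rcases lt_or_ge 0 x with h0 | h0
  · rw [if_pos h0, if_pos (by linarith)]
  · rw [if_neg (not_lt.2 h0), if_neg (not_lt.2 (by linarith))]

lemma aux_split (g : ℝ → ℝ) (hg : Integrable g) (a : ℝ) :
    ∫ x in Set.Ioi a, g x = (∫ x in a..0, g x) + ∫ x in Set.Ioi (0:ℝ), g x := by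
  rcases le_or_gt a 0 with h | h
  · rw [intervalIntegral.integral_of_le h,
      ← setIntegral_union (Set.Ioc_disjoint_Ioi le_rfl) measurableSet_Ioi
        hg.integrableOn hg.integrableOn, Set.Ioc_union_Ioi_eq_Ioi h]
  · have key : ∫ x in Set.Ioi (0:ℝ), g x = (∫ x in Set.Ioc 0 a, g x) + ∫ x in Set.Ioi a, g x := by
      rw [← setIntegral_union (Set.Ioc_disjoint_Ioi le_rfl) measurableSet_Ioi
        hg.integrableOn hg.integrableOn, Set.Ioc_union_Ioi_eq_Ioi h.le]
    rw [intervalIntegral.integral_symm, intervalIntegral.integral_of_le h.le]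
    linarith [key]

lemma gauss_shift (σ a : ℝ) (hσ : 0 < σ) :
    ∫ r in Set.Ioi (0:ℝ), Real.exp (-r^2/(2*σ^2) + a*r)
      = Real.sqrt (π/2) * σ * Real.exp (a^2*σ^2/2) *
        (1 + (2/Real.sqrt π) * ∫ t in (0:ℝ)..(a*σ/Real.sqrt 2), Real.exp (-t^2)) := by
  have hσ0 : σ ≠ 0 := hσ.ne'
  have hb : (0:ℝ) < (2*σ^2)⁻¹ := by positivity
  have hg : Integrable (fun x : ℝ => Real.exp (-x^2/(2*σ^2))) := by
    have heq : (fun x : ℝ => Real.exp (-(2*σ^2)⁻¹ * x^2))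
        = fun x : ℝ => Real.exp (-x^2/(2*σ^2)) := by
      funext x; congr 1; ring
    rw [← heq]
    exact integrable_exp_neg_mul_sq hb
  have hpt : ∀ r : ℝ, Real.exp (-r^2/(2*σ^2) + a*r)
      = Real.exp (a^2*σ^2/2) * Real.exp (-(r - a*σ^2)^2/(2*σ^2)) := by
    intro r
    rw [← Real.exp_add]
    congr 1
    field_simp
    ring
  simp only [hpt]
  rw [MeasureTheory.integral_const_mul,
    aux_translate (fun x : ℝ => Real.exp (-x^2/(2*σ^2))) (a*σ^2),
    aux_split (fun x : ℝ => Real.exp (-x^2/(2*σ^2))) hg]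
  have h1 : ∫ x in Set.Ioi (0:ℝ), Real.exp (-x^2/(2*σ^2)) = Real.sqrt (π/2) * σ := by
    have key := integral_gaussian_Ioi ((2*σ^2)⁻¹)
    have heq : (fun x : ℝ => Real.exp (-(2*σ^2)⁻¹ * x^2))
        = fun x : ℝ => Real.exp (-x^2/(2*σ^2)) := by
      funext x; congr 1; ring
    rw [heq] at key
    rw [key, show π / (2*σ^2)⁻¹ = (π/2) * (2*σ)^2 by field_simp,
      Real.sqrt_mul (by positivity : (0:ℝ) ≤ π/2) _, Real.sqrt_sq (by positivity)]
    ring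
  have h2 : (∫ x in (-(a*σ^2))..0, Real.exp (-x^2/(2*σ^2)))
      = ∫ x in (0:ℝ)..(a*σ^2), Real.exp (-x^2/(2*σ^2)) := by
    have key := intervalIntegral.integral_comp_neg (a := (0:ℝ)) (b := a*σ^2)
      (fun x : ℝ => Real.exp (-x^2/(2*σ^2)))
    rw [neg_zero] at key
    rw [← key]
    apply intervalIntegral.integral_congr
    intro x _
    simp [neg_sq]
  have hcne : σ * Real.sqrt 2 ≠ 0 := by positivity
  have h3 : (∫ x in (0:ℝ)..(a*σ^2), Real.exp (-x^2/(2*σ^2)))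
      = (σ * Real.sqrt 2) * ∫ t in (0:ℝ)..(a*σ/Real.sqrt 2), Real.exp (-t^2) := by
    have heq : ∀ x : ℝ, Real.exp (-x^2/(2*σ^2)) = Real.exp (-(x/(σ*Real.sqrt 2))^2) := by
      intro x
      congr 1
      rw [div_pow, mul_pow, Real.sq_sqrt (by norm_num : (0:ℝ) ≤ 2)]
      ring
    simp only [heq]
    rw [intervalIntegral.integral_comp_div (fun t => Real.exp (-t^2)) hcne, zero_div,
      smul_eq_mul]
    congr 2
    have hs2ne : Real.sqrt 2 ≠ 0 := by positivity
    field_simp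
  rw [h2, h3, h1]
  have hs2 : Real.sqrt 2 = Real.sqrt (π/2) * (2/Real.sqrt π) := by
    have h22 : Real.sqrt 2 * Real.sqrt 2 = 2 := Real.mul_self_sqrt (by norm_num)
    have hπ : (0:ℝ) < Real.sqrt π := Real.sqrt_pos.mpr pi_pos
    have h2p : (0:ℝ) < Real.sqrt 2 := by positivity
    rw [Real.sqrt_div pi_pos.le]
    field_simp
    nlinarith [h22]
  rw [hs2]
  ring

lemma gauss_int (σ a : ℝ) (hσ : 0 < σ) :
    Integrable (fun r : ℝ => Real.exp (-r^2/(2*σ^2) + a*r)) := by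
  have hσ0 : σ ≠ 0 := hσ.ne'
  have hb : (0:ℝ) < (2*σ^2)⁻¹ := by positivity
  have hg : Integrable (fun x : ℝ => Real.exp (-x^2/(2*σ^2))) := by
    have heq : (fun x : ℝ => Real.exp (-(2*σ^2)⁻¹ * x^2))
        = fun x : ℝ => Real.exp (-x^2/(2*σ^2)) := by
      funext x; congr 1; ring
    rw [← heq]
    exact integrable_exp_neg_mul_sq hb
  have h2 := (hg.comp_sub_right (a*σ^2)).const_mul (Real.exp (a^2*σ^2/2))
  have heq2 : (fun x : ℝ => Real.exp (a^2*σ^2/2) * Real.exp (-(x - a*σ^2)^2/(2*σ^2)))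
      = fun r : ℝ => Real.exp (-r^2/(2*σ^2) + a*r) := by
    funext r
    rw [← Real.exp_add]
    congr 1
    field_simp
    ring
  rw [← heq2]
  exact h2


/-- Radial normalizing integral of the isotropic wrapped normal distribution on the
`d`-dimensional Poincaré ball of curvature `c`:
`∫₀^∞ exp(−r²/(2σ²))·(sinh(√c·r)/√c)^(d−1) dr
 = √(π/2)·σ·(2√c)^{−(d−1)} ∑_{k=0}^{d−1} (−1)^k C(d−1,k) exp((d−1−2k)²cσ²/2)
     ·(1 + erf((d−1−2k)√c·σ/√2))`. -/
theorem stmt_9 (c σ : ℝ) (d : ℕ) (hc : 0 < c) (hσ : 0 < σ) (hd : 1 ≤ d) :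
    ∫ r in Set.Ioi (0 : ℝ),
        Real.exp (-r ^ 2 / (2 * σ ^ 2)) * (Real.sinh (Real.sqrt c * r) / Real.sqrt c) ^ (d - 1)
      = Real.sqrt (π / 2) * σ * (2 * Real.sqrt c) ^ (-((d : ℤ) - 1)) *
          ∑ k ∈ Finset.range d,
            (-1 : ℝ) ^ k * ((d - 1).choose k : ℝ) *
              Real.exp (((d : ℝ) - 1 - 2 * k) ^ 2 * c * σ ^ 2 / 2) *
              (1 + (2 / Real.sqrt π) *
                ∫ t in (0 : ℝ)..(((d : ℝ) - 1 - 2 * k) * Real.sqrt c * σ / Real.sqrt 2),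
                  Real.exp (-t ^ 2)) := by
  have hσ0 : σ ≠ 0 := hσ.ne'
  obtain ⟨n, rfl⟩ : ∃ n : ℕ, d = n + 1 := ⟨d - 1, by omega⟩
  have hA : (0:ℝ) < Real.sqrt c := Real.sqrt_pos.mpr hc
  have hA2 : Real.sqrt c ^ 2 = c := Real.sq_sqrt hc.le
  simp only [Nat.add_sub_cancel]
  have key : ∀ r : ℝ,
      Real.exp (-r ^ 2 / (2 * σ ^ 2)) * (Real.sinh (Real.sqrt c * r) / Real.sqrt c) ^ n
      = ∑ m ∈ Finset.range (n+1),
          ((-1:ℝ) ^ (m+n) * (n.choose m : ℝ) * ((2*Real.sqrt c)^n)⁻¹)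
            * Real.exp (-r ^ 2 / (2 * σ ^ 2) + ((2*(m:ℝ) - n) * Real.sqrt c) * r) := by
    intro r
    rw [Real.sinh_eq, div_div, div_pow, sub_pow, Finset.sum_div, Finset.mul_sum]
    refine Finset.sum_congr rfl fun m hm => ?_
    have hm' : m ≤ n := Nat.lt_succ_iff.mp (Finset.mem_range.mp hm)
    have e1 : Real.exp (Real.sqrt c * r) ^ m
        = Real.exp ((m:ℝ) * (Real.sqrt c * r)) := (Real.exp_nat_mul _ m).symm
    have e2 : Real.exp (-(Real.sqrt c * r)) ^ (n - m)
        = Real.exp (-(((n:ℝ) - m) * (Real.sqrt c * r))) := by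
      rw [← Real.exp_nat_mul]
      congr 1
      push_cast [hm']
      ring
    rw [e1, e2,
      show -r ^ 2 / (2 * σ ^ 2) + ((2*(m:ℝ) - n) * Real.sqrt c) * r
        = -r ^ 2 / (2 * σ ^ 2) + ((m:ℝ) * (Real.sqrt c * r)
            + -(((n:ℝ) - m) * (Real.sqrt c * r))) from by ring,
      Real.exp_add, Real.exp_add]
    ring
  simp only [key]
  rw [MeasureTheory.integral_finset_sum _
    (fun i _ => ((gauss_int σ _ hσ).const_mul _).integrableOn)]
  have G : ∀ a : ℝ, ∫ r in Set.Ioi (0:ℝ), Real.exp (-r^2/(2*σ^2) + a*r)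
      = Real.sqrt (π/2) * σ * Real.exp (a^2*σ^2/2) *
        (1 + (2/Real.sqrt π) * ∫ t in (0:ℝ)..(a*σ/Real.sqrt 2), Real.exp (-t^2)) :=
    fun a => gauss_shift σ a hσ
  simp only [MeasureTheory.integral_const_mul, G]
  rw [show -((↑(n+1) : ℤ) - 1) = -(n : ℤ) by push_cast; ring, zpow_neg, zpow_natCast,
    ← Finset.sum_range_reflect, Finset.mul_sum]
  refine Finset.sum_congr rfl fun m hm => ?_
  have hm' : m ≤ n := Nat.lt_succ_iff.mp (Finset.mem_range.mp hm)
  have hsign : (-1:ℝ)^(n - m + n) = (-1)^m := by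
    have hkey : n - m + n + m = 2*n := by omega
    calc (-1:ℝ)^(n - m + n) = (-1)^(n - m + n) * ((-1)^m * (-1)^m) := by
          rw [← pow_add, Even.neg_one_pow ⟨m, rfl⟩, mul_one]
      _ = ((-1)^(n - m + n) * (-1)^m) * (-1)^m := by ring
      _ = 1 * (-1)^m := by rw [← pow_add, hkey, pow_mul]; norm_num
      _ = (-1)^m := one_mul _
  simp only [Nat.add_sub_cancel, Nat.choose_symm hm', hsign]
  push_cast [hm']
  rw [show ((2 * ((n:ℝ) - m) - n) * Real.sqrt c) ^ 2 * σ ^ 2 / 2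
        = ((n:ℝ) + 1 - 1 - 2 * m) ^ 2 * c * σ ^ 2 / 2 from by rw [mul_pow, hA2]; ring,
    show (2 * ((n:ℝ) - m) - n) * Real.sqrt c * σ / Real.sqrt 2
        = ((n:ℝ) + 1 - 1 - 2 * m) * Real.sqrt c * σ / Real.sqrt 2 from by ring]
  ring
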